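/- Let r ≥ 1 be an integer and b ≥ 2. For k ∈ ℕ with b-adic expansion k = κ_1 b^{a_1−1} + ... + κ_ν b^{a_ν−1} (a_1 > ... > a_ν > 0, κ_i ∈ {1,...,b−1}) with ν > r digits, the k-th Walsh coefficient of x^r/r! vanishes: ∫_0^1 (x^r/r!) \overline{wal_k(x)} dx = 0. -/

import Mathlib

open scoped Real

/-- The `k`-th `b`-adic Walsh function: for `x = ∑ ξ_i b^{-i}` and
`k = ∑ κ_i b^i`, `wal_k(x) = ω_b^{κ_0 ξ_1 + κ_1 ξ_2 + ⋯}` with `ω_b = e^{2πi/b}`. -/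
noncomputable def walsh (b k : ℕ) (x : ℝ) : ℂ :=
  Complex.exp (2 * Real.pi * Complex.I *
    (∑ i ∈ Finset.range (k + 1),
      ((k / b ^ i % b : ℕ) : ℂ) * ((⌊x * (b : ℝ) ^ (i + 1)⌋ % (b : ℤ) : ℤ) : ℂ)) / b)

/-- The `k`-th `b`-adic Walsh function: for `x = ∑ ξ_i b^{-i}` and
`k = ∑ κ_i b^i`, `wal_k(x) = ω_b^{κ_0 ξ_1 + κ_1 ξ_2 + ⋯}` with `ω_b = e^{2πi/b}`. -/
noncomputable def wroot (b : ℕ) : ℂ := Complex.exp (-(2 * Real.pi * Complex.I) / b)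

lemma wroot_pow_b {b : ℕ} (hb : 2 ≤ b) : wroot b ^ b = 1 := by
  have hb0 : (b : ℂ) ≠ 0 := Nat.cast_ne_zero.mpr (by omega)
  rw [wroot, ← Complex.exp_nat_mul, mul_div_cancel₀ _ hb0, Complex.exp_neg,
    Complex.exp_two_pi_mul_I, inv_one]

lemma wroot_pow_ne_one {b : ℕ} (hb : 2 ≤ b) {e : ℕ} (h : ¬ b ∣ e) : wroot b ^ e ≠ 1 := by
  have hb0 : (b : ℂ) ≠ 0 := Nat.cast_ne_zero.mpr (by omega)
  rw [wroot, ← Complex.exp_nat_mul]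
  intro hone
  rw [Complex.exp_eq_one_iff] at hone
  obtain ⟨n, hn⟩ := hone
  have h2 : (2 * (Real.pi:ℂ) * Complex.I : ℂ) ≠ 0 := Complex.two_pi_I_ne_zero
  have key : (e : ℂ) = ((-n * b : ℤ) : ℂ) := by
    have h1 : (e:ℂ) * -(2 * Real.pi * Complex.I) = n * (2 * Real.pi * Complex.I) * b := by
      field_simp at hn
      linear_combination (2 * Real.pi * Complex.I) * hn
    push_cast
    have h3 : (-(e:ℂ)) * (2 * Real.pi * Complex.I) = ((n:ℂ) * b) * (2 * Real.pi * Complex.I) := by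
      ring_nf
      ring_nf at h1
      linear_combination h1
    have := mul_right_cancel₀ h2 h3
    linear_combination -this
  have heq : (e : ℤ) = -n * b := by exact_mod_cast key
  exact h (Int.natCast_dvd_natCast.mp ⟨-n, by rw [heq, mul_comm]⟩)

lemma geom_zero {b : ℕ} (z : ℂ) (hz : z ≠ 1) (hzb : z ^ b = 1) :
    ∑ c ∈ Finset.range b, z ^ c = 0 := by
  rw [geom_sum_eq hz, hzb, sub_self, zero_div]

lemma sum_range_mul' {M : Type*} [AddCommMonoid M] (f : ℕ → M) (q p : ℕ) :
    ∑ m ∈ Finset.range (q * p), f m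
      = ∑ c ∈ Finset.range q, ∑ t ∈ Finset.range p, f (c * p + t) := by
  induction q with
  | zero => simp
  | succ n ih =>
      rw [Finset.sum_range_succ, ← ih, Nat.succ_mul, Finset.sum_range_add]

lemma digit_lo {b : ℕ} (hb : 0 < b) {a j c t : ℕ} (hj : j < a) (ht : t < b ^ a) :
    (c * b ^ a + t) / b ^ j % b = t / b ^ j % b := by
  have h1 : c * b ^ a = b ^ j * (b * (c * b ^ (a - j - 1))) := by
    have e : j + 1 + (a - j - 1) = a := by omega
    calc c * b ^ a = c * b ^ (j + 1 + (a - j - 1)) := by rw [e]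
      _ = b ^ j * (b * (c * b ^ (a - j - 1))) := by rw [pow_add, pow_succ]; ring
  rw [h1, Nat.mul_add_div (pow_pos hb j), Nat.mul_add_mod]

lemma digit_hi {b : ℕ} (hb : 0 < b) {a c t : ℕ} (hc : c < b) (ht : t < b ^ a) :
    (c * b ^ a + t) / b ^ a % b = c := by
  rw [mul_comm, Nat.mul_add_div (pow_pos hb a), Nat.div_eq_of_lt ht]
  simpa using Nat.mod_eq_of_lt hc

lemma key {b : ℕ} (hb : 2 ≤ b) (e : ℕ → ℕ) :
    ∀ (a : ℕ) (T : Finset ℕ), T ⊆ Finset.range a → (∀ j ∈ T, ¬ b ∣ e j) →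
    ∀ s : ℕ, s < T.card →
    ∑ m ∈ Finset.range (b ^ a),
      (∏ j ∈ T, wroot b ^ (e j * (m / b ^ j % b))) * (m : ℂ) ^ s = 0 := by
  have hb0 : 0 < b := by omega
  intro a
  induction a with
  | zero =>
      intro T hT he s hs
      have hT0 : T = ∅ := Finset.subset_empty.mp (by simpa using hT)
      subst hT0; simp at hs
  | succ a ih =>
      intro T hT he s hs
      rw [pow_succ', sum_range_mul']
      by_cases ha : a ∈ T
      · set T' := T.erase a with hT'
        have hT'sub : T' ⊆ Finset.range a := by
          intro j hj
          have hj1 := Finset.mem_of_mem_erase hj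
          have hj2 := Finset.ne_of_mem_erase hj
          have := hT hj1
          simp only [Finset.mem_range] at this ⊢
          omega
        have he' : ∀ j ∈ T', ¬ b ∣ e j := fun j hj => he j (Finset.mem_of_mem_erase hj)
        have step : ∀ c ∈ Finset.range b, ∀ t ∈ Finset.range (b ^ a),
            (∏ j ∈ T, wroot b ^ (e j * ((c * b ^ a + t) / b ^ j % b))) *
              ((c * b ^ a + t : ℕ) : ℂ) ^ s
            = ∑ u ∈ Finset.range (s + 1),
                (wroot b ^ (e a * c) * ((c : ℂ) * (b : ℂ) ^ a) ^ u * (s.choose u : ℂ)) *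
                ((∏ j ∈ T', wroot b ^ (e j * (t / b ^ j % b))) * (t : ℂ) ^ (s - u)) := by
          intro c hc t ht
          simp only [Finset.mem_range] at hc ht
          have hprod : (∏ j ∈ T, wroot b ^ (e j * ((c * b ^ a + t) / b ^ j % b)))
              = wroot b ^ (e a * c) * ∏ j ∈ T', wroot b ^ (e j * (t / b ^ j % b)) := by
            rw [← Finset.mul_prod_erase T _ ha, digit_hi hb0 hc ht]
            congr 1
            apply Finset.prod_congr rfl
            intro j hj
            rw [digit_lo hb0 (Finset.mem_range.mp (hT'sub hj)) ht]
          have hcast : ((c * b ^ a + t : ℕ) : ℂ) = (c : ℂ) * (b : ℂ) ^ a + (t : ℂ) := by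
            push_cast; ring
          rw [hprod, hcast, add_pow, Finset.mul_sum]
          apply Finset.sum_congr rfl
          intro u hu
          ring
        rw [Finset.sum_congr rfl (fun c hc => Finset.sum_congr rfl (step c hc))]
        rw [Finset.sum_congr rfl (fun c _ => Finset.sum_comm), Finset.sum_comm]
        apply Finset.sum_eq_zero
        intro u hu
        rw [← Finset.sum_mul_sum]
        rcases Nat.eq_zero_or_pos u with hu0 | hu0
        · apply mul_eq_zero_of_left
          subst hu0
          have h1 : ∑ c ∈ Finset.range b,
              wroot b ^ (e a * c) * ((c : ℂ) * (b : ℂ) ^ a) ^ 0 * ((s.choose 0 : ℕ) : ℂ)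
              = ∑ c ∈ Finset.range b, (wroot b ^ (e a)) ^ c := by
            simp [pow_mul]
          rw [h1]
          exact geom_zero _ (wroot_pow_ne_one hb (he a ha))
            (by rw [← pow_mul, mul_comm, pow_mul, wroot_pow_b hb, one_pow])
        · apply mul_eq_zero_of_right
          apply ih T' hT'sub he'
          have hc' : T'.card = T.card - 1 := Finset.card_erase_of_mem ha
          simp only [Finset.mem_range] at hu
          omega
      · have hTsub : T ⊆ Finset.range a := by
          intro j hj
          have := hT hj
          simp only [Finset.mem_range] at this ⊢
          rcases Nat.lt_succ_iff_lt_or_eq.mp this with h | h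
          · exact h
          · exact absurd (h ▸ hj) ha
        have step : ∀ c ∈ Finset.range b, ∀ t ∈ Finset.range (b ^ a),
            (∏ j ∈ T, wroot b ^ (e j * ((c * b ^ a + t) / b ^ j % b))) *
              ((c * b ^ a + t : ℕ) : ℂ) ^ s
            = ∑ u ∈ Finset.range (s + 1),
                (((c : ℂ) * (b : ℂ) ^ a) ^ u * (s.choose u : ℂ)) *
                ((∏ j ∈ T, wroot b ^ (e j * (t / b ^ j % b))) * (t : ℂ) ^ (s - u)) := by
          intro c hc t ht
          simp only [Finset.mem_range] at hc ht
          have hprod : (∏ j ∈ T, wroot b ^ (e j * ((c * b ^ a + t) / b ^ j % b)))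
              = ∏ j ∈ T, wroot b ^ (e j * (t / b ^ j % b)) := by
            apply Finset.prod_congr rfl
            intro j hj
            rw [digit_lo hb0 (Finset.mem_range.mp (hTsub hj)) ht]
          have hcast : ((c * b ^ a + t : ℕ) : ℂ) = (c : ℂ) * (b : ℂ) ^ a + (t : ℂ) := by
            push_cast; ring
          rw [hprod, hcast, add_pow, Finset.mul_sum]
          apply Finset.sum_congr rfl
          intro u hu
          ring
        rw [Finset.sum_congr rfl (fun c hc => Finset.sum_congr rfl (step c hc))]
        rw [Finset.sum_congr rfl (fun c _ => Finset.sum_comm), Finset.sum_comm]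
        apply Finset.sum_eq_zero
        intro u hu
        rw [← Finset.sum_mul_sum]
        apply mul_eq_zero_of_right
        apply ih T hTsub he
        simp only [Finset.mem_range] at hu
        omega

lemma floor_digit {b k m i : ℕ} (hb : 2 ≤ b) (hi : i ≤ k) {x : ℝ}
    (hx : (m : ℝ) / (b : ℝ) ^ (k + 1) ≤ x) (hx' : x < ((m : ℝ) + 1) / (b : ℝ) ^ (k + 1)) :
    ⌊x * (b : ℝ) ^ (i + 1)⌋ = ((m / b ^ (k - i) : ℕ) : ℤ) := by
  have hbp : (0 : ℝ) < (b : ℝ) := by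
    have : (0:ℕ) < b := by omega
    exact_mod_cast this
  set d := b ^ (k - i) with hd
  have hdp : 0 < d := pow_pos (by omega : 0 < b) _
  have hdpr : (0 : ℝ) < (d : ℝ) := by exact_mod_cast hdp
  have hbir : (0 : ℝ) < (b : ℝ) ^ (i + 1) := by positivity
  have hsplit : ((b : ℝ)) ^ (k + 1) = (d : ℝ) * (b : ℝ) ^ (i + 1) := by
    have e : (k - i) + (i + 1) = k + 1 := by omega
    rw [hd]
    push_cast
    rw [← pow_add, e]
  have h1 : ((m / d : ℕ) : ℝ) * (d : ℝ) ≤ (m : ℝ) := by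
    exact_mod_cast Nat.div_mul_le_self m d
  have h2 : (m : ℝ) + 1 ≤ (((m / d : ℕ) : ℝ) + 1) * (d : ℝ) := by
    have hn : m + 1 ≤ (m / d + 1) * d := by
      have := Nat.div_add_mod m d
      have := Nat.mod_lt m hdp
      calc m + 1 = d * (m / d) + m % d + 1 := by omega
        _ ≤ d * (m / d) + d := by omega
        _ = (m / d + 1) * d := by ring
    exact_mod_cast hn
  rw [Int.floor_eq_iff]
  constructor
  · push_cast
    calc ((m / d : ℕ) : ℝ) ≤ (m : ℝ) / (d : ℝ) := by
          rw [le_div_iff₀ hdpr]; exact h1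
      _ = (m : ℝ) / (b : ℝ) ^ (k + 1) * (b : ℝ) ^ (i + 1) := by
          rw [hsplit]; field_simp
      _ ≤ x * (b : ℝ) ^ (i + 1) := mul_le_mul_of_nonneg_right hx (le_of_lt hbir)
  · push_cast
    calc x * (b : ℝ) ^ (i + 1)
        < ((m : ℝ) + 1) / (b : ℝ) ^ (k + 1) * (b : ℝ) ^ (i + 1) :=
          mul_lt_mul_of_pos_right hx' hbir
      _ = ((m : ℝ) + 1) / (d : ℝ) := by rw [hsplit]; field_simp
      _ ≤ ((m / d : ℕ) : ℝ) + 1 := by rw [div_le_iff₀ hdpr]; exact h2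

lemma walsh_conj_eq {b k m : ℕ} (hb : 2 ≤ b) {x : ℝ}
    (hx : (m : ℝ) / (b : ℝ) ^ (k + 1) ≤ x) (hx' : x < ((m : ℝ) + 1) / (b : ℝ) ^ (k + 1)) :
    (starRingEnd ℂ) (walsh b k x)
      = ∏ i ∈ Finset.range (k + 1), wroot b ^ ((k / b ^ i % b) * (m / b ^ (k - i) % b)) := by
  have hb0 : (b : ℂ) ≠ 0 := Nat.cast_ne_zero.mpr (by omega)
  have hfl : ∀ i ∈ Finset.range (k + 1),
      ((k / b ^ i % b : ℕ) : ℂ) * ((⌊x * (b : ℝ) ^ (i + 1)⌋ % (b : ℤ) : ℤ) : ℂ)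
        = (((k / b ^ i % b) * (m / b ^ (k - i) % b) : ℕ) : ℂ) := by
    intro i hi
    rw [floor_digit hb (by simpa using Nat.lt_succ_iff.mp (Finset.mem_range.mp hi)) hx hx']
    push_cast
    norm_cast
    push_cast
    ring
  rw [walsh, Finset.sum_congr rfl hfl, ← Nat.cast_sum]
  rw [← Complex.exp_conj]
  have hrhs : ∏ i ∈ Finset.range (k + 1),
        wroot b ^ ((k / b ^ i % b) * (m / b ^ (k - i) % b))
      = Complex.exp (((∑ i ∈ Finset.range (k + 1),
          (k / b ^ i % b) * (m / b ^ (k - i) % b) : ℕ) : ℂ) * (-(2 * Real.pi * Complex.I) / b)) := by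
    rw [Nat.cast_sum, Finset.sum_mul, Complex.exp_sum]
    apply Finset.prod_congr rfl
    intro i _
    rw [wroot, ← Complex.exp_nat_mul]
  rw [hrhs]
  congr 1
  simp only [map_div₀, map_mul, Complex.conj_I, Complex.conj_ofReal, map_natCast, map_ofNat]
  ring

/-- If `k` has more than `r` nonzero `b`-adic digits, then the `k`-th Walsh
coefficient of `x^r / r!` vanishes. -/
theorem stmt_11 (b r k : ℕ) (hb : 2 ≤ b) (hr : 1 ≤ r)
    (hν : r < ((Finset.range (k + 1)).filter (fun i => k / b ^ i % b ≠ 0)).card) :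
    (∫ x in (0:ℝ)..1, ((x ^ r / (r.factorial : ℝ) : ℝ) : ℂ) *
        (starRingEnd ℂ) (walsh b k x)) = 0 := by
  classical
  have hb0 : 0 < b := by omega
  set N := b ^ (k + 1) with hN
  have hNp : 0 < N := pow_pos hb0 _
  set Nr : ℝ := (b : ℝ) ^ (k + 1) with hNr
  have hNrpos : (0 : ℝ) < Nr := by
    have : (0:ℝ) < (b:ℝ) := by exact_mod_cast hb0
    positivity
  have hNcast : ((N : ℕ) : ℝ) = Nr := by rw [hN, hNr]; push_cast; ring
  set W : ℕ → ℂ := fun m =>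
    ∏ i ∈ Finset.range (k + 1), wroot b ^ ((k / b ^ i % b) * (m / b ^ (k - i) % b)) with hW
  set f : ℝ → ℂ := fun x =>
    ((x ^ r / (r.factorial : ℝ) : ℝ) : ℂ) * (starRingEnd ℂ) (walsh b k x) with hf
  set P : ℕ → ℝ := fun i => (i : ℝ) / Nr with hP
  have hP1 : ∀ m : ℕ, P (m + 1) = ((m : ℝ) + 1) / Nr := by
    intro m; simp only [hP]; push_cast; ring
  have hrfacpos : (0:ℝ) < (r.factorial : ℝ) := by exact_mod_cast r.factorial_pos
  -- a.e. equality on each piece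
  have haeimp : ∀ m : ℕ, ∀ᵐ x : ℝ ∂MeasureTheory.volume,
      x ∈ Set.uIoc (P m) (P (m + 1)) → f x = ((x ^ r / (r.factorial : ℝ) : ℝ) : ℂ) * W m := by
    intro m
    have hle : P m ≤ P (m + 1) := by
      rw [hP1]; simp only [hP]
      exact (div_le_div_iff_of_pos_right hNrpos).mpr (by linarith)
    have hne : ∀ᵐ x : ℝ ∂MeasureTheory.volume, x ≠ P (m + 1) := by
      have h0 : MeasureTheory.volume ({P (m + 1)} : Set ℝ) = 0 :=
        MeasureTheory.measure_singleton _
      rw [MeasureTheory.ae_iff]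
      convert h0 using 2
      ext x; simp
    filter_upwards [hne] with x hxne hxmem
    rw [Set.uIoc_of_le hle] at hxmem
    have hx : (m : ℝ) / Nr ≤ x := le_of_lt hxmem.1
    have hx' : x < ((m : ℝ) + 1) / Nr := by
      rw [← hP1]; exact lt_of_le_of_ne hxmem.2 hxne
    rw [hP1] at hxmem
    simp only [hf]
    rw [walsh_conj_eq hb hx hx']
  -- interval integrability
  have hcont : Continuous fun x : ℝ => ((x ^ r / (r.factorial : ℝ) : ℝ) : ℂ) :=
    Complex.continuous_ofReal.comp ((continuous_pow r).div_const _)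
  have hii : ∀ i : ℕ, IntervalIntegrable f MeasureTheory.volume (P i) (P (i + 1)) := by
    intro i
    have hgint : IntervalIntegrable (fun x : ℝ => ((x ^ r / (r.factorial : ℝ) : ℝ) : ℂ) * W i)
        MeasureTheory.volume (P i) (P (i + 1)) :=
      (hcont.mul continuous_const).intervalIntegrable _ _
    exact hgint.congr_ae (Filter.EventuallyEq.symm ((MeasureTheory.ae_restrict_iff' measurableSet_uIoc).mpr (haeimp i)))
  -- value on each piece
  have hval : ∀ m : ℕ, (∫ x in P m..P (m + 1), f x)
      = W m * (((P (m + 1)) ^ (r + 1) - (P m) ^ (r + 1)) / ((r : ℝ) + 1) / (r.factorial : ℝ) : ℝ) := by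
    intro m
    rw [intervalIntegral.integral_congr_ae (haeimp m)]
    rw [intervalIntegral.integral_mul_const, intervalIntegral.integral_ofReal]
    rw [intervalIntegral.integral_div, integral_pow]
    rw [mul_comm]
  -- key application
  have hkey : ∀ s, s ≤ r → ∑ m ∈ Finset.range N, W m * (m : ℂ) ^ s = 0 := by
    intro s hs
    set T0 := (Finset.range (k + 1)).filter (fun i => k / b ^ i % b ≠ 0) with hT0
    set e : ℕ → ℕ := fun j => k / b ^ (k - j) % b with he
    set T := T0.image (fun i => k - i) with hT
    have hmemT0 : ∀ i ∈ T0, i ≤ k ∧ k / b ^ i % b ≠ 0 := by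
      intro i hi
      simp only [hT0, Finset.mem_filter, Finset.mem_range] at hi
      exact ⟨by omega, hi.2⟩
    have hinj : ∀ x ∈ T0, ∀ y ∈ T0, k - x = k - y → x = y := by
      intro x hx y hy hxy
      have hx' := hmemT0 x hx
      have hy' := hmemT0 y hy
      omega
    have hcard : T.card = T0.card :=
      Finset.card_image_of_injOn (fun x hx y hy hxy => hinj x hx y hy hxy)
    have hTsub : T ⊆ Finset.range (k + 1) := by
      intro j hj
      simp only [hT, Finset.mem_image] at hj
      obtain ⟨i, hi, rfl⟩ := hj
      simp only [Finset.mem_range]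
      omega
    have hdvd : ∀ j ∈ T, ¬ b ∣ e j := by
      intro j hj
      simp only [hT, Finset.mem_image] at hj
      obtain ⟨i, hi, rfl⟩ := hj
      obtain ⟨hik, hne⟩ := hmemT0 i hi
      simp only [he]
      rw [show k - (k - i) = i by omega]
      intro hdd
      have h1 : k / b ^ i % b < b := Nat.mod_lt _ hb0
      have h2 := Nat.le_of_dvd (Nat.pos_of_ne_zero hne) hdd
      omega
    have hslt : s < T.card := by rw [hcard]; omega
    have hWm : ∀ m : ℕ, W m = ∏ j ∈ T, wroot b ^ (e j * (m / b ^ j % b)) := by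
      intro m
      have h1 : ∏ i ∈ T0, wroot b ^ ((k / b ^ i % b) * (m / b ^ (k - i) % b)) = W m := by
        simp only [hW, hT0]
        apply Finset.prod_filter_of_ne
        intro i _ hfne
        by_contra h0
        exact hfne (by simp [h0])
      rw [← h1, hT, Finset.prod_image hinj]
      apply Finset.prod_congr rfl
      intro i hi
      obtain ⟨hik, -⟩ := hmemT0 i hi
      simp only [he]
      rw [show k - (k - i) = i by omega]
    calc ∑ m ∈ Finset.range N, W m * (m : ℂ) ^ s
        = ∑ m ∈ Finset.range (b ^ (k + 1)),
            (∏ j ∈ T, wroot b ^ (e j * (m / b ^ j % b))) * (m : ℂ) ^ s := by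
          rw [← hN]
          exact Finset.sum_congr rfl (fun m _ => by rw [hWm m])
      _ = 0 := key hb e (k + 1) T hTsub hdvd s hslt
  -- binomial expansion
  have hbin : ∀ m : ℕ, ((m : ℂ) + 1) ^ (r + 1) - (m : ℂ) ^ (r + 1)
      = ∑ s ∈ Finset.range (r + 1), (m : ℂ) ^ s * ((r + 1).choose s : ℂ) := by
    intro m
    have h := add_pow (m : ℂ) 1 (r + 1)
    rw [Finset.sum_range_succ] at h
    simp only [one_pow, mul_one, Nat.choose_self, Nat.cast_one] at h
    rw [h]
    ring
  have hZ : ∑ m ∈ Finset.range N, W m * (((m : ℂ) + 1) ^ (r + 1) - (m : ℂ) ^ (r + 1)) = 0 := by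
    calc ∑ m ∈ Finset.range N, W m * (((m : ℂ) + 1) ^ (r + 1) - (m : ℂ) ^ (r + 1))
        = ∑ m ∈ Finset.range N, ∑ s ∈ Finset.range (r + 1),
            (W m * (m : ℂ) ^ s) * ((r + 1).choose s : ℂ) := by
          refine Finset.sum_congr rfl (fun m _ => ?_)
          rw [hbin m, Finset.mul_sum]
          exact Finset.sum_congr rfl (fun u _ => by ring)
      _ = ∑ s ∈ Finset.range (r + 1), ∑ m ∈ Finset.range N,
            (W m * (m : ℂ) ^ s) * ((r + 1).choose s : ℂ) := Finset.sum_comm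
      _ = 0 := by
          refine Finset.sum_eq_zero (fun s hs => ?_)
          rw [← Finset.sum_mul, hkey s (by simp only [Finset.mem_range] at hs; omega), zero_mul]
  -- put everything together
  have hsum := intervalIntegral.sum_integral_adjacent_intervals
    (μ := MeasureTheory.volume) (a := P) (f := f) (n := N) (fun i _ => hii i)
  have hP0 : P 0 = 0 := by simp [hP]
  have hPN : P N = 1 := by
    simp only [hP]
    rw [hNcast]
    exact div_self (ne_of_gt hNrpos)
  rw [hP0, hPN] at hsum
  have hterm : ∀ m : ℕ,
      ((P (m + 1)) ^ (r + 1) - (P m) ^ (r + 1)) / ((r : ℝ) + 1) / (r.factorial : ℝ)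
      = (((m : ℝ) + 1) ^ (r + 1) - (m : ℝ) ^ (r + 1)) *
          ((1 / Nr) ^ (r + 1) / ((r : ℝ) + 1) / (r.factorial : ℝ)) := by
    intro m
    rw [hP1]
    simp only [hP]
    rw [div_pow, div_pow]
    field_simp
    rw [one_div, inv_pow, mul_assoc, mul_comm _ ((Nr ^ (r + 1))⁻¹), ← mul_assoc,
      mul_inv_cancel₀ (pow_ne_zero _ (ne_of_gt hNrpos)), one_mul]
  calc (∫ x in (0:ℝ)..1, f x)
      = ∑ m ∈ Finset.range N, ∫ x in P m..P (m + 1), f x := hsum.symm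
    _ = ∑ m ∈ Finset.range N, (W m * (((m : ℂ) + 1) ^ (r + 1) - (m : ℂ) ^ (r + 1))) *
          (((1 / Nr) ^ (r + 1) / ((r : ℝ) + 1) / (r.factorial : ℝ) : ℝ) : ℂ) := by
        refine Finset.sum_congr rfl (fun m _ => ?_)
        rw [hval m, hterm m]
        push_cast
        ring
    _ = (∑ m ∈ Finset.range N, W m * (((m : ℂ) + 1) ^ (r + 1) - (m : ℂ) ^ (r + 1))) *
          (((1 / Nr) ^ (r + 1) / ((r : ℝ) + 1) / (r.factorial : ℝ) : ℝ) : ℂ) := by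
        rw [Finset.sum_mul]
    _ = 0 := by rw [hZ, zero_mul]
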